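/- Assume f satisfies the basic assumptions, and let K > 0 be such that f(t,x,u) ≤ Ku for all (t,x) ∈ ℝ² and u ∈ [0,M]. Set F(u) = (K/M)u(2M−u). Suppose c* > 0 and Φ ∈ C²([0,∞)) satisfy dΦ'' − c*Φ' + F(Φ) = 0 on (0,∞), 0 < Φ(x) < 2M for x ∈ (0,∞), Φ(0) = 0, μΦ'(0) = c*, and Φ(x) → 2M as x → ∞. Then every classical solution (u,h) of the half-line free boundary problem (1.10) with initial data u₀ ∈ H₊(h₀) satisfying u₀(x) < M for x < h₀ satisfies limsup as t → ∞ of h(t)/t ≤ c*. -/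

import Mathlib

open Filter Topology Set

noncomputable section

/-- `u` solves `u_t = d u_xx + f(t,x,u)` classically at every point `(t,x)` of the set `s`:
the spatial function is twice differentiable there and the time derivative exists and
equals `d u_xx + f(t,x,u)`. -/
def SolvesPDE (d : ℝ) (f : ℝ → ℝ → ℝ → ℝ) (u : ℝ → ℝ → ℝ) (s : Set (ℝ × ℝ)) : Prop :=
  ∀ q ∈ s,
    DifferentiableAt ℝ (u q.1) q.2 ∧
    DifferentiableAt ℝ (deriv (u q.1)) q.2 ∧
    HasDerivAt (fun t => u t q.2)
      (d * deriv (deriv (u q.1)) q.2 + f q.1 q.2 (u q.1 q.2)) q.1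

/-- Basic assumptions on the reaction term `f(t,x,u)` (for `u ≥ 0`): continuity,
Hölder continuity of class `C^{α/2,α}` in `(t,x)` locally uniformly in `u`,
`C¹` in `u` uniformly in `(t,x)`, `f(t,x,0) = 0`, nonpositivity for large `u`,
and space-time periodicity. -/
structure BasicAssumptions (ω L : ℝ) (f : ℝ → ℝ → ℝ → ℝ) : Prop where
  cont : ContinuousOn (fun q : ℝ × ℝ × ℝ => f q.1 q.2.1 q.2.2) {q : ℝ × ℝ × ℝ | 0 ≤ q.2.2}
  holder : ∃ α ∈ Set.Ioo (0:ℝ) 1, ∀ R > 0, ∃ C > 0, ∀ t s x y u : ℝ,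
    0 ≤ u → u ≤ R → |f t x u - f s y u| ≤ C * (|t - s| ^ (α / 2) + |x - y| ^ α)
  c1 : ∃ fu : ℝ → ℝ → ℝ → ℝ,
    (∀ t x u : ℝ, 0 ≤ u → HasDerivWithinAt (fun w => f t x w) (fu t x u) (Set.Ici 0) u) ∧
    ∀ ε > 0, ∃ δ > 0, ∀ t x u v : ℝ, 0 ≤ u → 0 ≤ v → |u - v| ≤ δ →
      |fu t x u - fu t x v| ≤ ε
  zero : ∀ t x : ℝ, f t x 0 = 0
  neg_large : ∃ M > 0, ∀ t x u : ℝ, M ≤ u → f t x u ≤ 0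
  per_t : ∀ t x u : ℝ, 0 ≤ u → f (t + ω) x u = f t x u
  per_x : ∀ t x u : ℝ, 0 ≤ u → f t (x + L) u = f t x u

/-- The class `H₊(h₀)` of admissible initial data on `(-∞, h₀]`. -/
def memHplus (h₀ : ℝ) (φ : ℝ → ℝ) : Prop :=
  ContinuousOn φ (Set.Iic h₀) ∧ (∃ C, ∀ x ≤ h₀, |φ x| ≤ C) ∧ φ h₀ = 0 ∧ ∀ x < h₀, 0 < φ x

/-- A classical solution `(u, h)` of the half-line free boundary problem (1.10)
with Stefan constant `μ` and initial data `u₀ ∈ H₊(h₀)`, with `u` extended by `0`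
for `x > h(t)`. -/
structure IsHalfFBPSolution (d μ : ℝ) (f : ℝ → ℝ → ℝ → ℝ) (h₀ : ℝ) (u₀ : ℝ → ℝ)
    (u : ℝ → ℝ → ℝ) (h : ℝ → ℝ) : Prop where
  h_init : h 0 = h₀
  h_smooth : ContDiffOn ℝ 1 h (Set.Ici 0)
  bdd : ∃ C, ∀ t ≥ (0:ℝ), ∀ x, |u t x| ≤ C
  u_cont : ContinuousOn (fun q : ℝ × ℝ => u q.1 q.2) {q : ℝ × ℝ | 0 ≤ q.1 ∧ q.2 ≤ h q.1}
  pde : SolvesPDE d f u {q : ℝ × ℝ | 0 < q.1 ∧ q.2 < h q.1}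
  bc : ∀ t > (0:ℝ), u t (h t) = 0
  stefan : ∀ t > (0:ℝ),
    HasDerivAt h (-μ * derivWithin (u t) (Set.Iic (h t)) (h t)) t
  init : ∀ x ≤ h₀, u 0 x = u₀ x
  ext : ∀ t ≥ (0:ℝ), ∀ x : ℝ, h t < x → u t x = 0

section AuxLemmas

lemma Iic_diff_self' (a : ℝ) : Iic a \ {a} = Iio a := by
  ext x; simp [lt_iff_le_and_ne]

lemma slope_left_le {g : ℝ → ℝ} {a m : ℝ} (hg : HasDerivAt g m a)
    (hev : ∀ᶠ x in 𝓝[<] a, g a ≤ g x) : m ≤ 0 := by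
  have hs : Tendsto (slope g a) (𝓝[<] a) (𝓝 m) :=
    (hasDerivAt_iff_tendsto_slope.1 hg).mono_left
      (nhdsWithin_mono _ (fun x hx => ne_of_lt hx))
  refine le_of_tendsto hs ?_
  filter_upwards [hev, self_mem_nhdsWithin] with x hx hx'
  have h1 : 0 ≤ g x - g a := by linarith
  have h2 : x - a < 0 := sub_neg.2 hx'
  rw [slope_def_field, div_eq_mul_inv]
  exact mul_nonpos_of_nonneg_of_nonpos h1 (inv_nonpos.2 h2.le)

lemma slope_left_ge {g : ℝ → ℝ} {a m : ℝ} (hg : HasDerivAt g m a)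
    (hev : ∀ᶠ x in 𝓝[<] a, g x ≤ g a) : 0 ≤ m := by
  have hs : Tendsto (slope g a) (𝓝[<] a) (𝓝 m) :=
    (hasDerivAt_iff_tendsto_slope.1 hg).mono_left
      (nhdsWithin_mono _ (fun x hx => ne_of_lt hx))
  refine ge_of_tendsto hs ?_
  filter_upwards [hev, self_mem_nhdsWithin] with x hx hx'
  have h1 : g x - g a ≤ 0 := by linarith
  have h2 : x - a < 0 := sub_neg.2 hx'
  rw [slope_def_field, div_eq_mul_inv]
  exact mul_nonneg_of_nonpos_of_nonpos h1 (inv_nonpos.2 h2.le)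

lemma slope_Iic_le {g : ℝ → ℝ} {a m : ℝ} (hg : HasDerivWithinAt g m (Iic a) a)
    (hev : ∀ᶠ x in 𝓝[<] a, g a ≤ g x) : m ≤ 0 := by
  have hs : Tendsto (slope g a) (𝓝[<] a) (𝓝 m) := by
    have := hasDerivWithinAt_iff_tendsto_slope.1 hg
    rwa [Iic_diff_self'] at this
  refine le_of_tendsto hs ?_
  filter_upwards [hev, self_mem_nhdsWithin] with x hx hx'
  have h1 : 0 ≤ g x - g a := by linarith
  have h2 : x - a < 0 := sub_neg.2 hx'
  rw [slope_def_field, div_eq_mul_inv]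
  exact mul_nonpos_of_nonneg_of_nonpos h1 (inv_nonpos.2 h2.le)

lemma second_deriv_nonneg_at_min {g : ℝ → ℝ} {x₀ m : ℝ}
    (hdiff : ∀ᶠ x in 𝓝 x₀, DifferentiableAt ℝ g x)
    (h2 : HasDerivAt (deriv g) m x₀)
    (hmin : ∀ᶠ x in 𝓝 x₀, g x₀ ≤ g x) : 0 ≤ m := by
  by_contra hm
  push_neg at hm
  have hd0 : deriv g x₀ = 0 := IsLocalMin.deriv_eq_zero hmin
  have hs : Tendsto (slope (deriv g) x₀) (𝓝[>] x₀) (𝓝 m) :=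
    (hasDerivAt_iff_tendsto_slope.1 h2).mono_left
      (nhdsWithin_mono _ (fun x hx => ne_of_gt hx))
  have hev : ∀ᶠ y in 𝓝[>] x₀,
      slope (deriv g) x₀ y < 0 ∧ DifferentiableAt ℝ g y ∧ g x₀ ≤ g y := by
    filter_upwards [hs.eventually_lt_const hm, hdiff.filter_mono nhdsWithin_le_nhds,
      hmin.filter_mono nhdsWithin_le_nhds] with y h1 h2 h3
    exact ⟨h1, h2, h3⟩
  obtain ⟨b, hb, hIoo⟩ := mem_nhdsGT_iff_exists_Ioo_subset.1 hev
  set y := (x₀ + b) / 2 with hy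
  have hx₀b : x₀ < b := hb
  have hyIoo : y ∈ Ioo x₀ b := by constructor <;> (simp [hy]; linarith)
  have hder : ∀ z ∈ Ioo x₀ b, deriv g z < 0 := by
    intro z hz
    have h1 := (hIoo hz).1
    rw [slope_def_field, hd0, sub_zero] at h1
    have hz0 : 0 < z - x₀ := by linarith [hz.1]
    by_contra hc
    push_neg at hc
    exact absurd h1 (not_lt.2 (div_nonneg hc hz0.le))
  have hcont : ContinuousOn g (Icc x₀ y) := by
    intro z hz
    rcases eq_or_lt_of_le hz.1 with rfl | hlt
    · exact (hdiff.self_of_nhds).continuousAt.continuousWithinAt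
    · exact ((hIoo ⟨hlt, lt_of_le_of_lt hz.2 hyIoo.2⟩).2.1).continuousAt.continuousWithinAt
  have hderiv : ∀ z ∈ Ioo x₀ y, HasDerivAt g (deriv g z) z := by
    intro z hz
    exact ((hIoo ⟨hz.1, lt_trans hz.2 hyIoo.2⟩).2.1).hasDerivAt
  obtain ⟨c, hc, hceq⟩ := exists_hasDerivAt_eq_slope g (deriv g) hyIoo.1 hcont hderiv
  have hge : 0 ≤ (g y - g x₀) / (y - x₀) := by
    have := (hIoo hyIoo).2.2
    have hpos : 0 < y - x₀ := by linarith [hyIoo.1]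
    exact div_nonneg (by linarith) hpos.le
  have := hder c ⟨hc.1, lt_trans hc.2 hyIoo.2⟩
  rw [hceq] at this
  exact absurd hge (not_le.2 this)

lemma phi_deriv_pos (d cstar K M : ℝ) (hd : 0 < d) (hK : 0 < K) (hM : 0 < M)
    (Φ : ℝ → ℝ)
    (hΦdiff : ∀ x : ℝ, 0 < x → DifferentiableAt ℝ Φ x ∧ DifferentiableAt ℝ (deriv Φ) x)
    (hODE : ∀ x : ℝ, 0 < x →
      d * deriv (deriv Φ) x - cstar * deriv Φ x + K / M * Φ x * (2 * M - Φ x) = 0)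
    (hrange : ∀ x : ℝ, 0 < x → 0 < Φ x ∧ Φ x < 2 * M)
    (hΦinf : Tendsto Φ atTop (𝓝 (2 * M))) :
    ∀ b : ℝ, 0 < b → 0 < deriv Φ b := by
  have hF : ∀ x : ℝ, 0 < x → 0 < K / M * Φ x * (2 * M - Φ x) := by
    intro x hx
    obtain ⟨h1, h2⟩ := hrange x hx
    have h3 : 0 < K / M := div_pos hK hM
    have h4 : 0 < 2 * M - Φ x := by linarith
    exact mul_pos (mul_pos h3 h1) h4
  have hΦ''neg : ∀ x : ℝ, 0 < x → deriv Φ x = 0 → deriv (deriv Φ) x < 0 := by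
    intro x hx hz
    have hO := hODE x hx
    rw [hz] at hO
    have hFx := hF x hx
    by_contra hc
    push_neg at hc
    nlinarith [mul_nonneg hd.le hc]
  intro b hb
  by_contra hle
  push_neg at hle
  obtain ⟨b', hb'pos, hb'neg⟩ : ∃ b' : ℝ, 0 < b' ∧ deriv Φ b' < 0 := by
    rcases hle.lt_or_eq with hlt | heq
    · exact ⟨b, hb, hlt⟩
    · have h2 : HasDerivAt (deriv Φ) (deriv (deriv Φ) b) b := (hΦdiff b hb).2.hasDerivAt
      have hneg : deriv (deriv Φ) b < 0 := hΦ''neg b hb heq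
      have hs : Tendsto (slope (deriv Φ) b) (𝓝[>] b) (𝓝 (deriv (deriv Φ) b)) :=
        (hasDerivAt_iff_tendsto_slope.1 h2).mono_left
          (nhdsWithin_mono _ (fun x hx => ne_of_gt hx))
      have hev : ∀ᶠ y in 𝓝[>] b, slope (deriv Φ) b y < 0 := hs.eventually_lt_const hneg
      obtain ⟨y, hy1, hy2⟩ := (hev.and self_mem_nhdsWithin).exists
      refine ⟨y, lt_trans hb hy2, ?_⟩
      rw [slope_def_field, heq, sub_zero] at hy1
      have hyb : 0 < y - b := by linarith [hy2]
      by_contra hc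
      push_neg at hc
      exact absurd hy1 (not_lt.2 (div_nonneg hc hyb.le))
  set Z : Set ℝ := {x | b' ≤ x ∧ deriv Φ x = 0} with hZ
  have hcontd : ∀ x : ℝ, b' ≤ x → ContinuousAt (deriv Φ) x :=
    fun x hx => ((hΦdiff x (lt_of_lt_of_le hb'pos hx)).2).continuousAt
  have hIVT : ∀ y : ℝ, b' ≤ y → 0 ≤ deriv Φ y → ∃ z, z ∈ Z ∧ z ≤ y := by
    intro y hy hge
    have hcont : ContinuousOn (deriv Φ) (Icc b' y) :=
      fun z hz => (hcontd z hz.1).continuousWithinAt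
    have h0 : (0:ℝ) ∈ Icc (deriv Φ b') (deriv Φ y) := ⟨hb'neg.le, hge⟩
    obtain ⟨z, hz1, hz2⟩ := intermediate_value_Icc hy hcont h0
    exact ⟨z, ⟨hz1.1, hz2⟩, hz1.2⟩
  have hZempty : Z = ∅ := by
    by_contra hne
    have hne' : Z.Nonempty := nonempty_iff_ne_empty.2 hne
    have hbdd : BddBelow Z := ⟨b', fun z hz => hz.1⟩
    have hcl : IsClosed Z := by
      apply IsSeqClosed.isClosed
      intro xs p hxs hp
      have h1 : b' ≤ p := ge_of_tendsto hp (Eventually.of_forall (fun n => (hxs n).1))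
      refine ⟨h1, ?_⟩
      have h2 : Tendsto (fun n => deriv Φ (xs n)) atTop (𝓝 (deriv Φ p)) :=
        ((hcontd p h1).tendsto).comp hp
      have h3 : (fun n => deriv Φ (xs n)) = fun _ => (0:ℝ) := funext fun n => (hxs n).2
      rw [h3] at h2
      exact (tendsto_nhds_unique tendsto_const_nhds h2).symm
    set x₂ := sInf Z with hx₂def
    have hx₂ : x₂ ∈ Z := hcl.csInf_mem hne' hbdd
    have hbx₂ : b' < x₂ := by
      rcases hx₂.1.lt_or_eq with hlt | heq
      · exact hlt
      · rw [← heq] at hx₂; exact absurd hx₂.2 (ne_of_lt hb'neg)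
    have hx₂pos : 0 < x₂ := lt_trans hb'pos hbx₂
    have hneg : ∀ y, b' ≤ y → y < x₂ → deriv Φ y < 0 := by
      intro y hy hylt
      by_contra hc
      push_neg at hc
      obtain ⟨z, hzZ, hzy⟩ := hIVT y hy hc
      exact absurd (csInf_le hbdd hzZ) (not_le.2 (lt_of_le_of_lt hzy hylt))
    have hd2 : HasDerivAt (deriv Φ) (deriv (deriv Φ) x₂) x₂ := (hΦdiff x₂ hx₂pos).2.hasDerivAt
    have hev : ∀ᶠ x in 𝓝[<] x₂, deriv Φ x ≤ deriv Φ x₂ := by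
      have hmem : Ioo b' x₂ ∈ 𝓝[<] x₂ := Ioo_mem_nhdsLT_of_mem ⟨hbx₂, le_refl _⟩
      filter_upwards [hmem] with x hx
      rw [hx₂.2]
      exact (hneg x hx.1.le hx.2).le
    have := slope_left_ge hd2 hev
    exact absurd this (not_le.2 (hΦ''neg x₂ hx₂pos hx₂.2))
  have hnegAll : ∀ x, b' ≤ x → deriv Φ x < 0 := by
    intro x hx
    by_contra hc
    push_neg at hc
    obtain ⟨z, hzZ, _⟩ := hIVT x hx hc
    rw [hZempty] at hzZ
    exact hzZ
  have hanti : StrictAntiOn Φ (Ici b') := by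
    apply strictAntiOn_of_deriv_neg (convex_Ici b')
    · exact fun x hx => ((hΦdiff x (lt_of_lt_of_le hb'pos hx)).1).continuousAt.continuousWithinAt
    · intro x hx
      rw [interior_Ici] at hx
      exact hnegAll x hx.le
  have hlim : 2 * M ≤ Φ (b' + 1) := by
    refine le_of_tendsto hΦinf ?_
    filter_upwards [eventually_ge_atTop (b' + 1)] with x hx
    rcases hx.lt_or_eq with hlt | heq
    · exact (hanti (by simp : b' + 1 ∈ Ici b') (le_trans (by linarith) hx) hlt).le
    · rw [← heq]
  have := (hrange (b' + 1) (by linarith)).2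
  linarith

end AuxLemmas
set_option maxHeartbeats 2000000 in
/-- Proposition 3.9 (comparison with a logistic semi-wave): the free boundary of the
half-line problem (1.10) moves at asymptotic speed at most `c*`, the speed of the
semi-wave `Φ` of the logistic nonlinearity `F(u) = (K/M) u (2M − u)` dominating `f`. -/
theorem half_line_boundary_speed_upper_bound
    (d μ ω L : ℝ) (hd : 0 < d) (hμ : 0 < μ) (hω : 0 < ω) (hL : 0 < L)
    (f : ℝ → ℝ → ℝ → ℝ) (hf : BasicAssumptions ω L f)
    (M : ℝ) (hM : 0 < M) (hfM : ∀ t x u : ℝ, M ≤ u → f t x u ≤ 0)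
    (K : ℝ) (hK : 0 < K)
    (hfK : ∀ t x u : ℝ, 0 ≤ u → u ≤ M → f t x u ≤ K * u)
    (cstar : ℝ) (hcstar : 0 < cstar)
    (Φ : ℝ → ℝ)
    (hΦcont : ContinuousOn Φ (Set.Ici 0))
    (hΦdiff : ∀ x : ℝ, 0 < x → DifferentiableAt ℝ Φ x ∧ DifferentiableAt ℝ (deriv Φ) x)
    (hODE : ∀ x : ℝ, 0 < x →
      d * deriv (deriv Φ) x - cstar * deriv Φ x + K / M * Φ x * (2 * M - Φ x) = 0)
    (hrange : ∀ x : ℝ, 0 < x → 0 < Φ x ∧ Φ x < 2 * M)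
    (hΦ0 : Φ 0 = 0)
    (hΦd0 : DifferentiableWithinAt ℝ Φ (Set.Ici 0) 0)
    (hΦ'0 : μ * derivWithin Φ (Set.Ici 0) 0 = cstar)
    (hΦinf : Tendsto Φ atTop (𝓝 (2 * M)))
    (h₀ : ℝ) (u₀ : ℝ → ℝ) (hu₀ : memHplus h₀ u₀)
    (hu₀M : ∀ x < h₀, u₀ x < M)
    (u : ℝ → ℝ → ℝ) (h : ℝ → ℝ) (hsol : IsHalfFBPSolution d μ f h₀ u₀ u h) :
    ∀ c'' > cstar, ∃ T, ∀ t ≥ T, h t / t ≤ c'' := by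
  obtain ⟨C0, hC0⟩ := hsol.bdd
  have hhcont : ContinuousOn h (Ici 0) := hsol.h_smooth.continuousOn
  -- initial data below M
  have huinit : ∀ x ≤ h 0, u 0 x < M := by
    intro x hx
    rw [hsol.h_init] at hx
    rw [hsol.init x hx]
    rcases hx.lt_or_eq with hlt | heq
    · exact hu₀M x hlt
    · rw [heq, hu₀.2.2.1]; exact hM
  ---------------------------------------------------------------
  -- STEP 1 : u ≤ M on the domain
  ---------------------------------------------------------------
  have huM : ∀ t, 0 ≤ t → ∀ x ≤ h t, u t x ≤ M := by
    set lam : ℝ := d + 1 with hlam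
    have hkey : ∀ ε : ℝ, 0 < ε → ∀ t, 0 ≤ t → ∀ x ≤ h t,
        u t x < M + ε * Real.exp (lam * t - x) := by
      intro ε hε
      by_contra hcon
      push_neg at hcon
      obtain ⟨t₁, ht₁, x₁, hx₁, hineq⟩ := hcon
      set B : Set ℝ := {t | 0 ≤ t ∧ ∃ x ≤ h t, M + ε * Real.exp (lam * t - x) ≤ u t x}
        with hBdef
      have hBne : B.Nonempty := ⟨t₁, ht₁, x₁, hx₁, hineq⟩
      have hBbdd : BddBelow B := ⟨0, fun z hz => hz.1⟩
      have hBcl : IsClosed B := by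
        apply IsSeqClosed.isClosed
        intro ts p hts hp
        have hp0 : 0 ≤ p := ge_of_tendsto hp (Eventually.of_forall fun n => (hts n).1)
        refine ⟨hp0, ?_⟩
        choose xs hxs1 hxs2 using fun n => (hts n).2
        have hMC : M < C0 := by
          have h1 := hxs2 0
          have h2 := (abs_le.1 (hC0 (ts 0) (hts 0).1 (xs 0))).2
          have hE : 0 < ε * Real.exp (lam * ts 0 - xs 0) := by positivity
          linarith
        set R := Real.log ((C0 - M) / ε) with hR
        have hxlow : ∀ n, lam * ts n - R ≤ xs n := by
          intro n
          have h1 := hxs2 n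
          have h2 := (abs_le.1 (hC0 (ts n) (hts n).1 (xs n))).2
          have h3 : Real.exp (lam * ts n - xs n) ≤ (C0 - M) / ε := by
            rw [le_div_iff₀ hε]
            nlinarith
          have h4 : lam * ts n - xs n ≤ R :=
            (Real.le_log_iff_exp_le (div_pos (by linarith) hε)).2 h3
          linarith
        have hhp : Tendsto (fun n => h (ts n)) atTop (𝓝 (h p)) :=
          ((hhcont p hp0).tendsto).comp
            (tendsto_nhdsWithin_of_tendsto_nhds_of_eventually_within _ hp
              (Eventually.of_forall fun n => (hts n).1))
        have hts' : Tendsto (fun n => lam * ts n) atTop (𝓝 (lam * p)) := hp.const_mul lam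
        have hev : ∀ᶠ n in atTop, xs n ∈ Icc (lam * p - R - 1) (h p + 1) := by
          filter_upwards [hts'.eventually (lt_mem_nhds (show lam * p - 1 < lam * p by linarith)),
            hhp.eventually (gt_mem_nhds (show h p < h p + 1 by linarith))] with n h1 h2
          exact ⟨by linarith [hxlow n], by linarith [hxs1 n]⟩
        obtain ⟨N, hN⟩ := eventually_atTop.1 hev
        obtain ⟨xb, hxbmem, φ, hφ, hxconv⟩ :=
          isCompact_Icc.tendsto_subseq (fun k => hN (N + k) (Nat.le_add_right N k))
        set idx : ℕ → ℕ := fun k => N + φ k with hidxdef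
        have hidx : Tendsto idx atTop atTop :=
          tendsto_atTop_mono (fun k => Nat.le_add_left _ _) hφ.tendsto_atTop
        have htconv : Tendsto (fun k => ts (idx k)) atTop (𝓝 p) := hp.comp hidx
        have hxconv' : Tendsto (fun k => xs (idx k)) atTop (𝓝 xb) := hxconv
        have hxble : xb ≤ h p :=
          le_of_tendsto_of_tendsto hxconv' (hhp.comp hidx)
            (Eventually.of_forall fun k => hxs1 (idx k))
        have hvcont : Tendsto (fun k => M + ε * Real.exp (lam * ts (idx k) - xs (idx k)))
            atTop (𝓝 (M + ε * Real.exp (lam * p - xb))) := by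
          have h1 : Tendsto (fun k => lam * ts (idx k) - xs (idx k)) atTop
              (𝓝 (lam * p - xb)) := ((htconv.const_mul lam).sub hxconv')
          exact tendsto_const_nhds.add
            (((Real.continuous_exp.tendsto _).comp h1).const_mul ε)
        have hucont : Tendsto (fun k => u (ts (idx k)) (xs (idx k))) atTop (𝓝 (u p xb)) := by
          have hc := hsol.u_cont (p, xb) ⟨hp0, hxble⟩
          have hqt : Tendsto (fun k => (ts (idx k), xs (idx k))) atTop (𝓝 (p, xb)) :=
            htconv.prodMk_nhds hxconv'
          exact (hc.tendsto).comp
            (tendsto_nhdsWithin_of_tendsto_nhds_of_eventually_within _ hqt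
              (Eventually.of_forall fun k => ⟨(hts _).1, hxs1 _⟩))
        exact ⟨xb, hxble,
          le_of_tendsto_of_tendsto hvcont hucont (Eventually.of_forall fun k => hxs2 (idx k))⟩
      set t₀ := sInf B with ht₀def
      have ht₀B : t₀ ∈ B := by rw [ht₀def]; exact hBcl.csInf_mem hBne hBbdd
      have ht₀0 : 0 ≤ t₀ := ht₀B.1
      have hgood : ∀ t, 0 ≤ t → t < t₀ → ∀ x ≤ h t,
          u t x < M + ε * Real.exp (lam * t - x) := by
        intro t h1 h2 x hx
        by_contra hc
        push_neg at hc
        have hle := csInf_le hBbdd (show t ∈ B from ⟨h1, x, hx, hc⟩)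
        rw [← ht₀def] at hle
        exact absurd hle (not_le.2 h2)
      clear_value t₀
      have ht₀pos : 0 < t₀ := by
        rcases ht₀0.lt_or_eq with hlt | heq
        · exact hlt
        · exfalso
          obtain ⟨x₀, hx₀le, hx₀ineq⟩ := ht₀B.2
          rw [← heq] at hx₀le hx₀ineq
          have := huinit x₀ hx₀le
          have hE : 0 < ε * Real.exp (lam * 0 - x₀) := by positivity
          linarith
      obtain ⟨x₀, hx₀le, hx₀ineq⟩ := ht₀B.2
      have hx₀lt : x₀ < h t₀ := by
        rcases hx₀le.lt_or_eq with hlt | heq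
        · exact hlt
        · exfalso
          rw [heq] at hx₀ineq
          rw [hsol.bc t₀ ht₀pos] at hx₀ineq
          have hE : 0 < ε * Real.exp (lam * t₀ - h t₀) := by positivity
          linarith
      have hhc : ContinuousAt h t₀ := (hsol.stefan t₀ ht₀pos).continuousAt
      -- boundary values below the barrier just before t₀
      have hkey0 : ∀ x, x < h t₀ → u t₀ x ≤ M + ε * Real.exp (lam * t₀ - x) := by
        intro x hx
        obtain ⟨hud, hud2, hut⟩ := hsol.pde (t₀, x) ⟨ht₀pos, hx⟩
        have hcu : ContinuousAt (fun t => u t x) t₀ := hut.continuousAt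
        have hcv : ContinuousAt (fun t => M + ε * Real.exp (lam * t - x)) t₀ := by
          fun_prop
        refine le_of_tendsto_of_tendsto (b := 𝓝[<] t₀)
          (hcu.tendsto.mono_left nhdsWithin_le_nhds)
          (hcv.tendsto.mono_left nhdsWithin_le_nhds) ?_
        have hmem : Ioo 0 t₀ ∈ 𝓝[<] t₀ := Ioo_mem_nhdsLT_of_mem ⟨ht₀pos, le_refl _⟩
        filter_upwards [hmem,
          (hhc.tendsto.eventually (lt_mem_nhds hx)).filter_mono nhdsWithin_le_nhds]
          with t ht hht
        exact (hgood t ht.1.le ht.2 x hht.le).le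
      have hx₀eq : u t₀ x₀ = M + ε * Real.exp (lam * t₀ - x₀) :=
        le_antisymm (hkey0 x₀ hx₀lt) hx₀ineq
      obtain ⟨hud, hud2, hut⟩ := hsol.pde (t₀, x₀) ⟨ht₀pos, hx₀lt⟩
      set E := Real.exp (lam * t₀ - x₀) with hEdef
      have hEpos : 0 < E := Real.exp_pos _
      set uxx := deriv (deriv (u t₀)) x₀ with huxxdef
      set fval := f t₀ x₀ (u t₀ x₀) with hfvaldef
      -- time-derivative inequality at the touching point
      have hψd : HasDerivAt (fun t => (M + ε * Real.exp (lam * t - x₀)) - u t x₀)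
          (ε * lam * E - (d * uxx + fval)) t₀ := by
        have hv : HasDerivAt (fun t => M + ε * Real.exp (lam * t - x₀)) (ε * lam * E) t₀ := by
          have h1 : HasDerivAt (fun t : ℝ => lam * t - x₀) lam t₀ := by
            simpa using ((hasDerivAt_id t₀).const_mul lam).sub_const x₀
          have h2 := (h1.exp.const_mul ε).const_add M
          convert h2 using 1
          · rfl
          · rfl
          rw [hEdef]; ring
        exact hv.sub hut
      have hA1 : ε * lam * E - (d * uxx + fval) ≤ 0 := by
        apply slope_left_le hψd
        have hmem : Ioo 0 t₀ ∈ 𝓝[<] t₀ := Ioo_mem_nhdsLT_of_mem ⟨ht₀pos, le_refl _⟩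
        filter_upwards [hmem,
          (hhc.tendsto.eventually (lt_mem_nhds hx₀lt)).filter_mono nhdsWithin_le_nhds]
          with t ht hht
        have h1 := hgood t ht.1.le ht.2 x₀ hht.le
        have h2 : u t₀ x₀ - (M + ε * Real.exp (lam * t₀ - x₀)) = 0 := by
          rw [hx₀eq]; ring
        simp only [hEdef] at *
        linarith
      -- spatial second-derivative inequality
      have hA2 : uxx ≤ ε * E := by
        have hIio : Iio (h t₀) ∈ 𝓝 x₀ := isOpen_Iio.mem_nhds hx₀lt
        have hVd : ∀ x : ℝ, HasDerivAt (fun y => M + ε * Real.exp (lam * t₀ - y))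
            (-(ε * Real.exp (lam * t₀ - x))) x := by
          intro x
          have h1 : HasDerivAt (fun y : ℝ => lam * t₀ - y) (-1) x := by
            simpa using (hasDerivAt_id x).const_sub (lam * t₀)
          have h2 := (h1.exp.const_mul ε).const_add M
          convert h2 using 1
          · rfl
          · rfl
          ring
        have hres := second_deriv_nonneg_at_min
          (g := fun x => (M + ε * Real.exp (lam * t₀ - x)) - u t₀ x)
          (x₀ := x₀) (m := ε * E - uxx) ?_ ?_ ?_
        · linarith
        · filter_upwards [hIio] with x hx
          exact ((hVd x).differentiableAt).sub (hsol.pde (t₀, x) ⟨ht₀pos, hx⟩).1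
        · have hev : deriv (fun x => (M + ε * Real.exp (lam * t₀ - x)) - u t₀ x)
              =ᶠ[𝓝 x₀] fun x => -(ε * Real.exp (lam * t₀ - x)) - deriv (u t₀) x := by
            filter_upwards [hIio] with x hx
            exact ((hVd x).sub ((hsol.pde (t₀, x) ⟨ht₀pos, hx⟩).1.hasDerivAt)).deriv
          have hG1 : HasDerivAt (fun x => -(ε * Real.exp (lam * t₀ - x)) - deriv (u t₀) x)
              (ε * E - uxx) x₀ := by
            have h1 : HasDerivAt (fun x : ℝ => lam * t₀ - x) (-1) x₀ := by
              simpa using (hasDerivAt_id x₀).const_sub (lam * t₀)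
            have h2 := ((h1.exp.const_mul ε).neg).sub hud2.hasDerivAt
            convert h2 using 1
            · rfl
            · rfl
            · rfl
            rw [hEdef, huxxdef]; ring
          exact hG1.congr_of_eventuallyEq hev
        · have hg0 : (M + ε * Real.exp (lam * t₀ - x₀)) - u t₀ x₀ = 0 := by
            rw [hx₀eq]; ring
          filter_upwards [hIio] with x hx
          rw [hg0]
          linarith [hkey0 x hx]
      -- the reaction term is nonpositive at the touching point
      have hfle : fval ≤ 0 := by
        apply hfM
        rw [hx₀eq]
        have : 0 < ε * E := by positivity
        simp only [hEdef] at *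
        linarith
      have : ε * E * (d + 1) ≤ d * (ε * E) := by
        have := mul_le_mul_of_nonneg_left hA2 hd.le
        rw [hlam] at hA1
        nlinarith
      nlinarith [mul_pos hε hEpos]
    -- conclude u ≤ M
    intro t ht x hx
    have hE : 0 < Real.exp (lam * t - x) := Real.exp_pos _
    refine le_of_forall_pos_le_add ?_
    intro ε' hε'
    have := hkey (ε' / Real.exp (lam * t - x)) (by positivity) t ht x hx
    rw [div_mul_cancel₀] at this
    · exact this.le
    · exact ne_of_gt hE
  ---------------------------------------------------------------
  -- STEP 2 : Φ' > 0
  ---------------------------------------------------------------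
  have hΦ' : ∀ b : ℝ, 0 < b → 0 < deriv Φ b :=
    phi_deriv_pos d cstar K M hd hK hM Φ hΦdiff hODE hrange hΦinf
  have hΦnonneg : ∀ y : ℝ, 0 ≤ y → 0 ≤ Φ y := by
    intro y hy
    rcases hy.lt_or_eq with hlt | heq
    · exact (hrange y hlt).1.le
    · rw [← heq, hΦ0]
  ---------------------------------------------------------------
  -- STEP 3 : constants
  ---------------------------------------------------------------
  intro c'' hc''
  set ε : ℝ := min 1 ((c'' - cstar) / (6 * cstar)) with hεdef
  have hε : 0 < ε := lt_min one_pos (div_pos (by linarith) (by linarith))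
  have hε1 : ε ≤ 1 := min_le_left _ _
  have hε2 : ε ≤ (c'' - cstar) / (6 * cstar) := min_le_right _ _
  set e1 : ℝ := 1 + ε with he1def
  have he1 : 1 < e1 := by rw [he1def]; linarith
  have he1pos : 0 < e1 := by linarith
  set c₂ : ℝ := e1 ^ 2 * cstar with hc₂def
  have hc₂pos : 0 < c₂ := by positivity
  have hc₂gt : cstar < c₂ := by
    rw [hc₂def]
    nlinarith [mul_pos (mul_pos (sub_pos.2 he1) (show (0:ℝ) < e1 + 1 by linarith)) hcstar]
  have hc₂le : c₂ ≤ (cstar + c'') / 2 := by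
    have h6 : ε * (6 * cstar) ≤ c'' - cstar := by
      rw [← le_div_iff₀ (by linarith : (0:ℝ) < 6 * cstar)]
      exact hε2
    have hsq : e1 ^ 2 ≤ 1 + 3 * ε := by nlinarith
    nlinarith
  obtain ⟨Y₀, hY₀⟩ : ∃ Y₀ : ℝ, ∀ y ≥ Y₀, 3 * M / 2 < Φ y :=
    eventually_atTop.1 (hΦinf.eventually (lt_mem_nhds (show 3 * M / 2 < 2 * M by linarith)))
  set Y : ℝ := max Y₀ 0 with hYdef
  have hY : ∀ y ≥ Y, 3 * M / 2 < Φ y := fun y hy => hY₀ y (le_trans (le_max_left _ _) hy)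
  have hY0 : 0 ≤ Y := le_max_right _ _
  set s₀ : ℝ := h₀ + Y + 1 with hs₀def
  set σ : ℝ → ℝ := fun t => s₀ + c₂ * t with hσdef
  have hσcont : Continuous σ := by rw [hσdef]; fun_prop
  have hσd : ∀ t : ℝ, HasDerivAt σ c₂ t := by
    intro t
    rw [hσdef]
    simpa using (((hasDerivAt_id t).const_mul c₂).const_add s₀)
  ---------------------------------------------------------------
  -- STEP 4 : main comparison  h t < σ t
  ---------------------------------------------------------------
  clear_value ε e1 c₂ Y s₀ σ
  have main : ∀ t, 0 ≤ t → h t < σ t := by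
    by_contra hcon
    push_neg at hcon
    obtain ⟨t₁, ht₁, hσh⟩ := hcon
    set B : Set ℝ := {t | 0 ≤ t ∧ (σ t ≤ h t ∨
      ∃ x, x ≤ h t ∧ x ≤ σ t ∧ e1 * Φ (σ t - x) ≤ u t x)} with hBdef
    have hBne : B.Nonempty := ⟨t₁, ht₁, Or.inl hσh⟩
    have hBbdd : BddBelow B := ⟨0, fun z hz => hz.1⟩
    -- witnesses are confined to a strip behind σ
    have hconf : ∀ t, 0 ≤ t → ∀ x, x ≤ h t → x ≤ σ t →
        e1 * Φ (σ t - x) ≤ u t x → σ t - Y < x := by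
      intro t ht x hxh hxσ hwu
      by_contra hc
      push_neg at hc
      have h1 : 3 * M / 2 < Φ (σ t - x) := hY _ (by linarith)
      have h2 : u t x ≤ M := huM t ht x hxh
      have h3 : Φ (σ t - x) ≤ e1 * Φ (σ t - x) :=
        le_mul_of_one_le_left (hΦnonneg _ (by linarith)) he1.le
      linarith
    have hBcl : IsClosed B := by
      apply IsSeqClosed.isClosed
      intro ts p hts hp
      have hp0 : 0 ≤ p := ge_of_tendsto hp (Eventually.of_forall fun n => (hts n).1)
      refine ⟨hp0, ?_⟩
      have hhp : Tendsto (fun n => h (ts n)) atTop (𝓝 (h p)) :=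
        ((hhcont p hp0).tendsto).comp
          (tendsto_nhdsWithin_of_tendsto_nhds_of_eventually_within _ hp
            (Eventually.of_forall fun n => (hts n).1))
      have hσp : Tendsto (fun n => σ (ts n)) atTop (𝓝 (σ p)) := (hσcont.tendsto p).comp hp
      by_cases hfreq : ∃ᶠ n in atTop, σ (ts n) ≤ h (ts n)
      · left
        obtain ⟨φ, hφ, hφP⟩ := Filter.extraction_of_frequently_atTop hfreq
        exact le_of_tendsto_of_tendsto (hσp.comp hφ.tendsto_atTop)
          (hhp.comp hφ.tendsto_atTop) (Eventually.of_forall hφP)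
      · right
        rw [Filter.not_frequently] at hfreq
        rw [eventually_atTop] at hfreq
        obtain ⟨N₁, hN₁⟩ := hfreq
        have hwit : ∀ n ≥ N₁, ∃ x, x ≤ h (ts n) ∧ x ≤ σ (ts n) ∧
            e1 * Φ (σ (ts n) - x) ≤ u (ts n) x := by
          intro n hn
          rcases (hts n).2 with hcase | hcase
          · exact absurd hcase (hN₁ n hn)
          · exact hcase
        choose! xs hxs1 hxs2 hxs3 using hwit
        have hev : ∀ᶠ n in atTop, xs n ∈ Icc (σ p - Y - 1) (h p + 1) := by
          filter_upwards [hσp.eventually (lt_mem_nhds (show σ p - 1 < σ p by linarith)),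
            hhp.eventually (gt_mem_nhds (show h p < h p + 1 by linarith)),
            eventually_ge_atTop N₁] with n h1 h2 h3
          have h4 := hconf (ts n) (hts n).1 (xs n) (hxs1 n h3) (hxs2 n h3) (hxs3 n h3)
          exact ⟨by linarith, by linarith [hxs1 n h3]⟩
        obtain ⟨N, hN⟩ := eventually_atTop.1 (hev.and (eventually_ge_atTop N₁))
        obtain ⟨xb, hxbmem, φ, hφ, hxconv⟩ :=
          isCompact_Icc.tendsto_subseq (fun k => (hN (N + k) (Nat.le_add_right N k)).1)
        set idx : ℕ → ℕ := fun k => N + φ k with hidxdef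
        have hidxN₁ : ∀ k, N₁ ≤ idx k := fun k => (hN (N + φ k) (Nat.le_add_right N _)).2
        have hidx : Tendsto idx atTop atTop :=
          tendsto_atTop_mono (fun k => Nat.le_add_left _ _) hφ.tendsto_atTop
        have htconv : Tendsto (fun k => ts (idx k)) atTop (𝓝 p) := hp.comp hidx
        have hxconv' : Tendsto (fun k => xs (idx k)) atTop (𝓝 xb) := hxconv
        have hxble : xb ≤ h p :=
          le_of_tendsto_of_tendsto hxconv' (hhp.comp hidx)
            (Eventually.of_forall fun k => hxs1 (idx k) (hidxN₁ k))
        have hxbσ : xb ≤ σ p :=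
          le_of_tendsto_of_tendsto hxconv' ((hσp.comp hidx))
            (Eventually.of_forall fun k => hxs2 (idx k) (hidxN₁ k))
        have hargconv : Tendsto (fun k => σ (ts (idx k)) - xs (idx k)) atTop
            (𝓝 (σ p - xb)) := (hσp.comp hidx).sub hxconv'
        have hwconv : Tendsto (fun k => e1 * Φ (σ (ts (idx k)) - xs (idx k))) atTop
            (𝓝 (e1 * Φ (σ p - xb))) := by
          have hΦc : ContinuousWithinAt Φ (Ici 0) (σ p - xb) :=
            hΦcont _ (by simp; linarith)
          exact ((hΦc.tendsto).comp
            (tendsto_nhdsWithin_of_tendsto_nhds_of_eventually_within _ hargconv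
              (Eventually.of_forall fun k => by
                simp only [mem_Ici, sub_nonneg]
                exact hxs2 (idx k) (hidxN₁ k)))).const_mul e1
        have hucont : Tendsto (fun k => u (ts (idx k)) (xs (idx k))) atTop (𝓝 (u p xb)) := by
          have hc := hsol.u_cont (p, xb) ⟨hp0, hxble⟩
          have hqt : Tendsto (fun k => (ts (idx k), xs (idx k))) atTop (𝓝 (p, xb)) :=
            htconv.prodMk_nhds hxconv'
          exact (hc.tendsto).comp
            (tendsto_nhdsWithin_of_tendsto_nhds_of_eventually_within _ hqt
              (Eventually.of_forall fun k => ⟨(hts _).1, hxs1 (idx k) (hidxN₁ k)⟩))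
        exact ⟨xb, hxble, hxbσ,
          le_of_tendsto_of_tendsto hwconv hucont
            (Eventually.of_forall fun k => hxs3 (idx k) (hidxN₁ k))⟩
    set t₀ := sInf B with ht₀def
    have ht₀B : t₀ ∈ B := by rw [ht₀def]; exact hBcl.csInf_mem hBne hBbdd
    have ht₀0 : 0 ≤ t₀ := ht₀B.1
    have hgood : ∀ t, 0 ≤ t → t < t₀ →
        h t < σ t ∧ ∀ x ≤ h t, u t x < e1 * Φ (σ t - x) := by
      intro t h1 h2
      have hnotB : t ∉ B := by
        intro hc
        have hle := csInf_le hBbdd hc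
        rw [← ht₀def] at hle
        exact absurd hle (not_le.2 h2)
      rw [hBdef] at hnotB
      simp only [mem_setOf_eq, not_and, not_or, not_exists] at hnotB
      obtain ⟨hB1, hB2⟩ := hnotB h1
      have hhσ : h t < σ t := lt_of_not_ge hB1
      refine ⟨hhσ, fun x hx => ?_⟩
      have := hB2 x
      push_neg at this
      exact this hx (le_trans hx hhσ.le)
    clear_value t₀
    have ht₀pos : 0 < t₀ := by
      rcases ht₀0.lt_or_eq with hlt | heq
      · exact hlt
      · exfalso
        rw [← heq] at ht₀B
        have hσ0 : σ 0 = s₀ := by rw [hσdef]; ring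
        rcases ht₀B.2 with hcase | ⟨x, hx1, hx2, hx3⟩
        · rw [hσ0, hsol.h_init] at hcase
          rw [hs₀def] at hcase
          linarith
        · have hxh₀ : x ≤ h₀ := by rwa [hsol.h_init] at hx1
          have harg : Y ≤ σ 0 - x := by
            rw [hσ0, hs₀def]; linarith
          have h1 : 3 * M / 2 < Φ (σ 0 - x) := hY _ harg
          have h2 : u 0 x < M := huinit x hx1
          have h3 : Φ (σ 0 - x) ≤ e1 * Φ (σ 0 - x) :=
            le_mul_of_one_le_left (hΦnonneg _ (by linarith)) he1.le
          linarith
    have hht₀cont : ContinuousAt h t₀ := (hsol.stefan t₀ ht₀pos).continuousAt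
    have ht₀le : h t₀ ≤ σ t₀ := by
      refine le_of_tendsto_of_tendsto (b := 𝓝[<] t₀)
        (hht₀cont.tendsto.mono_left nhdsWithin_le_nhds)
        ((hσcont.tendsto t₀).mono_left nhdsWithin_le_nhds) ?_
      have hmem : Ioo 0 t₀ ∈ 𝓝[<] t₀ := Ioo_mem_nhdsLT_of_mem ⟨ht₀pos, le_refl _⟩
      filter_upwards [hmem] with t ht
      exact (hgood t ht.1.le ht.2).1.le
    -- the comparison at time t₀ for interior points
    have key : ∀ x, x < h t₀ → u t₀ x ≤ e1 * Φ (σ t₀ - x) := by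
      intro x hx
      have hxσ : x < σ t₀ := lt_of_lt_of_le hx ht₀le
      obtain ⟨hud, hud2, hut⟩ := hsol.pde (t₀, x) ⟨ht₀pos, hx⟩
      have hcu : ContinuousAt (fun t => u t x) t₀ := hut.continuousAt
      have hcw : ContinuousAt (fun t => e1 * Φ (σ t - x)) t₀ := by
        have hΦc : ContinuousAt Φ (σ t₀ - x) :=
          hΦcont.continuousAt (Ici_mem_nhds (by linarith))
        have hinner : Tendsto (fun t => σ t - x) (𝓝 t₀) (𝓝 (σ t₀ - x)) :=
          ((hσcont.tendsto t₀).sub tendsto_const_nhds)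
        have h2 : Tendsto (fun t => Φ (σ t - x)) (𝓝 t₀) (𝓝 (Φ (σ t₀ - x))) :=
          hΦc.tendsto.comp hinner
        exact h2.const_mul e1
      refine le_of_tendsto_of_tendsto (b := 𝓝[<] t₀)
        (hcu.tendsto.mono_left nhdsWithin_le_nhds)
        (hcw.tendsto.mono_left nhdsWithin_le_nhds) ?_
      have hmem : Ioo 0 t₀ ∈ 𝓝[<] t₀ := Ioo_mem_nhdsLT_of_mem ⟨ht₀pos, le_refl _⟩
      filter_upwards [hmem,
        (hht₀cont.tendsto.eventually (lt_mem_nhds hx)).filter_mono nhdsWithin_le_nhds]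
        with t ht hht
      exact ((hgood t ht.1.le ht.2).2 x hht.le).le
    -- dichotomy at t₀
    by_cases hbd : σ t₀ ≤ h t₀
    · -- boundary touching:  h t₀ = σ t₀
      have heq : h t₀ = σ t₀ := le_antisymm ht₀le hbd
      set Dw := derivWithin (u t₀) (Iic (h t₀)) (h t₀) with hDwdef
      have hgd : HasDerivAt (fun t => σ t - h t) (c₂ - (-μ * Dw)) t₀ :=
        (hσd t₀).sub (hsol.stefan t₀ ht₀pos)
      have hslope : c₂ - (-μ * Dw) ≤ 0 := by
        apply slope_left_le hgd
        have hmem : Ioo 0 t₀ ∈ 𝓝[<] t₀ := Ioo_mem_nhdsLT_of_mem ⟨ht₀pos, le_refl _⟩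
        filter_upwards [hmem] with t ht
        have h1 := (hgood t ht.1.le ht.2).1
        show σ t₀ - h t₀ ≤ σ t - h t
        rw [heq]
        simp only [sub_self]
        linarith
      -- so h'(t₀) ≥ c₂;  now bound h'(t₀) from above
      have hupper : -μ * Dw ≤ e1 * cstar := by
        by_cases hdiffw : DifferentiableWithinAt ℝ (u t₀) (Iic (h t₀)) (h t₀)
        · set d0 := derivWithin Φ (Ici 0) 0 with hd0def
          have hinner : HasDerivWithinAt (fun x => σ t₀ - x) (-1) (Iic (h t₀)) (h t₀) := by
            exact (by simpa using (hasDerivAt_id (h t₀)).const_sub (σ t₀) :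
              HasDerivAt (fun x => σ t₀ - x) (-1) (h t₀)).hasDerivWithinAt
          have hmaps : MapsTo (fun x => σ t₀ - x) (Iic (h t₀)) (Ici 0) := by
            intro x hx
            simp only [mem_Iic] at hx
            simp only [mem_Ici, sub_nonneg]
            rw [← heq]
            exact hx
          have hΦ0' : HasDerivWithinAt Φ d0 (Ici 0) ((fun x => σ t₀ - x) (h t₀)) := by
            have hz : σ t₀ - h t₀ = 0 := by rw [heq]; ring
            show HasDerivWithinAt Φ d0 (Ici 0) (σ t₀ - h t₀)
            rw [hz]
            exact hΦd0.hasDerivWithinAt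
          have hcompW : HasDerivWithinAt (fun x => Φ (σ t₀ - x)) (d0 * -1)
              (Iic (h t₀)) (h t₀) := hΦ0'.comp (h t₀) hinner hmaps
          have hφd : HasDerivWithinAt (fun x => e1 * Φ (σ t₀ - x) - u t₀ x)
              (e1 * (d0 * -1) - Dw) (Iic (h t₀)) (h t₀) :=
            (hcompW.const_mul e1).sub hdiffw.hasDerivWithinAt
          have hm : e1 * (d0 * -1) - Dw ≤ 0 := by
            apply slope_Iic_le hφd
            have hz : σ t₀ - h t₀ = 0 := by rw [heq]; ring
            have hval : e1 * Φ (σ t₀ - h t₀) - u t₀ (h t₀) = 0 := by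
              rw [hsol.bc t₀ ht₀pos, hz, hΦ0]
              ring
            filter_upwards [self_mem_nhdsWithin] with x hx
            show e1 * Φ (σ t₀ - h t₀) - u t₀ (h t₀) ≤ e1 * Φ (σ t₀ - x) - u t₀ x
            rw [hval]
            have := key x hx
            linarith
          have hμd0 : μ * d0 = cstar := hΦ'0
          have h4 : -Dw ≤ e1 * d0 := by linarith
          have h5 : μ * -Dw ≤ μ * (e1 * d0) := mul_le_mul_of_nonneg_left h4 hμ.le
          have h6 : μ * (e1 * d0) = e1 * cstar := by rw [← hμd0]; ring
          linarith
        · rw [hDwdef, derivWithin_zero_of_not_differentiableWithinAt hdiffw]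
          have h7 : 0 < e1 * cstar := mul_pos he1pos hcstar
          rw [mul_zero]
          linarith
      have h8 : e1 * cstar < c₂ := by
        rw [hc₂def]
        nlinarith [mul_pos (mul_pos he1pos hcstar) (sub_pos.2 he1)]
      linarith
    · -- interior touching
      have hlt : h t₀ < σ t₀ := lt_of_not_ge hbd
      obtain ⟨x₀, hx₀h, hx₀σ, hwu⟩ : ∃ x, x ≤ h t₀ ∧ x ≤ σ t₀ ∧
          e1 * Φ (σ t₀ - x) ≤ u t₀ x := by
        rcases ht₀B.2 with hcase | hcase
        · exact absurd hcase hbd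
        · exact hcase
      have hx₀lt : x₀ < h t₀ := by
        rcases hx₀h.lt_or_eq with hl | heqx
        · exact hl
        · exfalso
          rw [heqx, hsol.bc t₀ ht₀pos] at hwu
          have hpos : 0 < Φ (σ t₀ - h t₀) := (hrange _ (by linarith)).1
          linarith [mul_pos he1pos hpos]
      set y₀ : ℝ := σ t₀ - x₀ with hy₀def
      have hy₀ : 0 < y₀ := by rw [hy₀def]; linarith
      have htouch : u t₀ x₀ = e1 * Φ y₀ := le_antisymm (key x₀ hx₀lt) hwu
      obtain ⟨hud, hud2, hut⟩ := hsol.pde (t₀, x₀) ⟨ht₀pos, hx₀lt⟩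
      set uxx := deriv (deriv (u t₀)) x₀ with huxxdef
      set fval := f t₀ x₀ (u t₀ x₀) with hfvaldef
      set Φ1 := deriv Φ y₀ with hΦ1def
      set Φ2 := deriv (deriv Φ) y₀ with hΦ2def
      set Φy := Φ y₀ with hΦydef
      -- time-derivative inequality
      have hψd : HasDerivAt (fun t => e1 * Φ (σ t - x₀) - u t x₀)
          (e1 * (Φ1 * c₂) - (d * uxx + fval)) t₀ := by
        have hinner : HasDerivAt (fun t => σ t - x₀) c₂ t₀ := (hσd t₀).sub_const x₀
        have hΦy' : HasDerivAt Φ Φ1 ((fun t => σ t - x₀) t₀) := (hΦdiff y₀ hy₀).1.hasDerivAt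
        have hcomp := (hΦy'.comp t₀ hinner).const_mul e1
        exact hcomp.sub hut
      have hA1 : e1 * (Φ1 * c₂) - (d * uxx + fval) ≤ 0 := by
        apply slope_left_le hψd
        have hmem : Ioo 0 t₀ ∈ 𝓝[<] t₀ := Ioo_mem_nhdsLT_of_mem ⟨ht₀pos, le_refl _⟩
        filter_upwards [hmem,
          (hht₀cont.tendsto.eventually (lt_mem_nhds hx₀lt)).filter_mono nhdsWithin_le_nhds]
          with t ht hht
        have h1 := (hgood t ht.1.le ht.2).2 x₀ hht.le
        show e1 * Φ (σ t₀ - x₀) - u t₀ x₀ ≤ e1 * Φ (σ t - x₀) - u t x₀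
        have h2 : e1 * Φ (σ t₀ - x₀) - u t₀ x₀ = 0 := by
          rw [htouch, show σ t₀ - x₀ = y₀ from hy₀def.symm, ← hΦydef]
          ring
        linarith
      -- spatial second-derivative inequality
      have hA2 : uxx ≤ e1 * Φ2 := by
        have hIio : Iio (h t₀) ∈ 𝓝 x₀ := isOpen_Iio.mem_nhds hx₀lt
        have hWd : ∀ x : ℝ, x < h t₀ →
            HasDerivAt (fun z => e1 * Φ (σ t₀ - z)) (-(e1 * deriv Φ (σ t₀ - x))) x := by
          intro x hx
          have hinner : HasDerivAt (fun z : ℝ => σ t₀ - z) (-1) x := by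
            simpa using (hasDerivAt_id x).const_sub (σ t₀)
          have hΦx : HasDerivAt Φ (deriv Φ (σ t₀ - x)) ((fun z : ℝ => σ t₀ - z) x) :=
            (hΦdiff (σ t₀ - x) (by linarith)).1.hasDerivAt
          have := (hΦx.comp x hinner).const_mul e1
          convert this using 1
          · rfl
          · rfl
          · rfl
          ring
        have hres := second_deriv_nonneg_at_min
          (g := fun x => e1 * Φ (σ t₀ - x) - u t₀ x)
          (x₀ := x₀) (m := e1 * Φ2 - uxx) ?_ ?_ ?_
        · linarith
        · filter_upwards [hIio] with x hx
          exact ((hWd x hx).differentiableAt).sub (hsol.pde (t₀, x) ⟨ht₀pos, hx⟩).1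
        · have hev : deriv (fun x => e1 * Φ (σ t₀ - x) - u t₀ x)
              =ᶠ[𝓝 x₀] fun x => -(e1 * deriv Φ (σ t₀ - x)) - deriv (u t₀) x := by
            filter_upwards [hIio] with x hx
            exact ((hWd x hx).sub ((hsol.pde (t₀, x) ⟨ht₀pos, hx⟩).1.hasDerivAt)).deriv
          have hG1 : HasDerivAt (fun x => -(e1 * deriv Φ (σ t₀ - x)) - deriv (u t₀) x)
              (e1 * Φ2 - uxx) x₀ := by
            have hinner : HasDerivAt (fun z : ℝ => σ t₀ - z) (-1) x₀ := by
              simpa using (hasDerivAt_id x₀).const_sub (σ t₀)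
            have hΦ2x : HasDerivAt (deriv Φ) Φ2 ((fun z : ℝ => σ t₀ - z) x₀) :=
              (hΦdiff y₀ hy₀).2.hasDerivAt
            have h2 := (((hΦ2x.comp x₀ hinner).const_mul e1).neg).sub hud2.hasDerivAt
            convert h2 using 1
            · rfl
            · rfl
            · rfl
            rw [huxxdef]; ring
          exact hG1.congr_of_eventuallyEq hev
        · have hg0 : e1 * Φ (σ t₀ - x₀) - u t₀ x₀ = 0 := by
            rw [htouch, show σ t₀ - x₀ = y₀ from hy₀def.symm, ← hΦydef]
            ring
          filter_upwards [hIio] with x hx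
          rw [hg0]
          linarith [key x hx]
      -- reaction term bound at the touching point
      have hΦypos : 0 < Φy := (hrange y₀ hy₀).1
      have hΦylt : Φy < 2 * M := (hrange y₀ hy₀).2
      set q : ℝ := K / M * Φy * (2 * M - Φy) with hqdef
      have hqpos : 0 < q := by
        rw [hqdef]
        have h3 : 0 < K / M := div_pos hK hM
        have h4 : 0 < 2 * M - Φy := by linarith
        exact mul_pos (mul_pos h3 hΦypos) h4
      have hf5 : fval < e1 * q := by
        rcases le_or_gt (e1 * Φy) M with hcase | hcase
        · have hle := hfK t₀ x₀ (u t₀ x₀) (by rw [htouch]; positivity)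
            (by rw [htouch]; exact hcase)
          rw [← hfvaldef] at hle
          have hΦyM : Φy < M := by
            have h9 := mul_lt_mul_of_pos_right he1 hΦypos
            rw [one_mul] at h9
            linarith
          have hid : e1 * q - K * (e1 * Φy) = e1 * (K / M) * Φy * (M - Φy) := by
            rw [hqdef]
            field_simp
            ring
          have hposx : 0 < e1 * (K / M) * Φy * (M - Φy) :=
            mul_pos (mul_pos (mul_pos he1pos (div_pos hK hM)) hΦypos) (by linarith)
          have hle2 : fval ≤ K * (e1 * Φy) := by rw [htouch] at hle; exact hle
          linarith
        · have hle := hfM t₀ x₀ (u t₀ x₀) (by rw [htouch]; linarith)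
          rw [← hfvaldef] at hle
          have : 0 < e1 * q := mul_pos he1pos hqpos
          linarith
      -- combine everything into a contradiction
      have hODEy := hODE y₀ hy₀
      rw [← hΦ1def, ← hΦ2def, ← hΦydef, ← hqdef] at hODEy
      have hΦ1pos : 0 < Φ1 := hΦ' y₀ hy₀
      have hduxx : d * uxx ≤ d * (e1 * Φ2) := mul_le_mul_of_nonneg_left hA2 hd.le
      have hsubst : d * (e1 * Φ2) = e1 * (cstar * Φ1) - e1 * q := by
        linear_combination e1 * hODEy
      have hchain : e1 * (Φ1 * c₂) < e1 * (cstar * Φ1) := by linarith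
      have hpos2 : 0 < e1 * Φ1 * (c₂ - cstar) :=
        mul_pos (mul_pos he1pos hΦ1pos) (by linarith)
      have hid2 : e1 * (Φ1 * c₂) - e1 * (cstar * Φ1) = e1 * Φ1 * (c₂ - cstar) := by ring
      linarith
  ---------------------------------------------------------------
  -- STEP 5 : conclusion
  ---------------------------------------------------------------
  refine ⟨max 1 ((max s₀ 0 + 1) * 2 / (c'' - cstar)), fun t ht => ?_⟩
  have ht1 : (1:ℝ) ≤ t := le_trans (le_max_left _ _) ht
  have htpos : 0 < t := by linarith
  have ht2 : (max s₀ 0 + 1) * 2 / (c'' - cstar) ≤ t := le_trans (le_max_right _ _) ht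
  have hmain := main t (by linarith)
  rw [div_le_iff₀ htpos]
  have h1 : h t < s₀ + c₂ * t := by rw [hσdef] at hmain; exact hmain
  have h2 : (max s₀ 0 + 1) * 2 ≤ (c'' - cstar) * t := by
    rw [div_le_iff₀ (by linarith : (0:ℝ) < c'' - cstar)] at ht2
    linarith [ht2]
  have h3 : s₀ ≤ max s₀ 0 := le_max_left _ _
  have h4 : c₂ * t ≤ (cstar + c'') / 2 * t := mul_le_mul_of_nonneg_right hc₂le htpos.le
  linarith
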